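/- Let r > 0 and let g : ℂ → ℂ be holomorphic on the punctured disc B(0, r) \ {0}. If ∫_{B(0,r)\{0}} |g|² dA < ∞, then the singularity at the origin is removable: there exists h : ℂ → ℂ holomorphic on the full disc B(0, r) with h(ζ) = g(ζ) for all ζ ∈ B(0, r) \ {0}. -/

import Mathlib

open MeasureTheory Complex Metric Real Set Filter Asymptotics
open scoped Topology

lemma circle_sq_bound (f : ℂ → ℂ) (c : ℂ) (R ρ : ℝ) (hρ : 0 < ρ) (hρR : ρ ≤ R)
    (hcont : ContinuousOn f (closedBall c R))
    (hdiff : ∀ z ∈ ball c R, DifferentiableAt ℂ f z) :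
    2 * π * ‖f c‖ ^ 2 ≤ ∫ θ in (0:ℝ)..(2 * π), ‖f (circleMap c ρ θ)‖ ^ 2 := by
  have hcauchy := Complex.circleIntegral_sub_center_inv_smul_of_differentiable_on_off_countable
    hρ Set.countable_empty (hcont.mono (closedBall_subset_closedBall hρR))
    (fun z hz => hdiff z (ball_subset_ball hρR hz.1))
  have hne : ∀ θ : ℝ, circleMap 0 ρ θ ≠ 0 := by
    intro θ h
    have := norm_circleMap_zero ρ θ
    rw [h] at this
    simp [abs_of_pos hρ] at this
    linarith
  have hLHS : (∮ z in C(c, ρ), (z - c)⁻¹ • f z) = I * ∫ θ in (0:ℝ)..(2*π), f (circleMap c ρ θ) := by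
    rw [circleIntegral, ← intervalIntegral.integral_const_mul]
    refine intervalIntegral.integral_congr fun θ _ => ?_
    simp only [deriv_circleMap, circleMap_sub_center, smul_eq_mul]
    field_simp [hne θ]
  rw [hLHS] at hcauchy
  have hint : (∫ θ in (0:ℝ)..(2*π), f (circleMap c ρ θ)) = (2 * π : ℝ) • f c := by
    have hI : (I : ℂ) ≠ 0 := I_ne_zero
    apply mul_left_cancel₀ hI
    rw [hcauchy, smul_eq_mul, real_smul]
    push_cast
    ring
  -- mean value inequality for abs
  set u : ℝ → ℝ := fun θ => ‖f (circleMap c ρ θ)‖ with hu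
  have hucont : Continuous u := by
    apply continuous_norm.comp
    apply hcont.comp_continuous (continuous_circleMap c ρ)
    exact fun θ => closedBall_subset_closedBall hρR (circleMap_mem_closedBall c hρ.le θ)
  have habs : 2 * π * ‖f c‖ ≤ ∫ θ in (0:ℝ)..(2*π), u θ := by
    have h1 := intervalIntegral.norm_integral_le_integral_norm
      (f := fun θ => f (circleMap c ρ θ)) (a := 0) (b := 2*π) (μ := volume) (by positivity)
    rw [hint] at h1
    simpa [norm_smul, abs_of_pos Real.pi_pos] using h1
  set A : ℝ := ∫ θ in (0:ℝ)..(2*π), u θ with hA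
  set B : ℝ := ∫ θ in (0:ℝ)..(2*π), u θ ^ 2 with hB
  have hiu : IntervalIntegrable u volume 0 (2*π) := hucont.intervalIntegrable _ _
  have hiu2 : IntervalIntegrable (fun θ => u θ ^ 2) volume 0 (2*π) :=
    (hucont.pow 2).intervalIntegrable _ _
  have key : 0 ≤ ∫ θ in (0:ℝ)..(2*π), (u θ - A / (2*π)) ^ 2 :=
    intervalIntegral.integral_nonneg (by positivity) fun θ _ => sq_nonneg _
  have expand : (∫ θ in (0:ℝ)..(2*π), (u θ - A / (2*π)) ^ 2)
      = B - 2 * (A / (2*π)) * A + (2*π) * (A / (2*π))^2 := by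
    have h2 : ∀ θ, (u θ - A / (2*π)) ^ 2 = u θ ^ 2 - (2 * (A/(2*π))) * u θ + (A/(2*π))^2 :=
      fun θ => by ring
    simp_rw [h2]
    rw [intervalIntegral.integral_add (hiu2.sub (hiu.const_mul _)) intervalIntegrable_const,
      intervalIntegral.integral_sub hiu2 (hiu.const_mul _),
      intervalIntegral.integral_const_mul, intervalIntegral.integral_const]
    simp only [← hA, ← hB, smul_eq_mul]
    ring
  rw [expand] at key
  have hm : ‖f c‖ ≤ A / (2*π) := by
    rw [le_div_iff₀ Real.two_pi_pos]; linarith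
  have hmul : 2 * (A / (2*π)) * A = 4 * π * (A / (2*π))^2 := by
    field_simp; ring
  rw [hmul] at key
  have hm2 : ‖f c‖ ^ 2 ≤ (A / (2*π)) ^ 2 :=
    pow_le_pow_left₀ (norm_nonneg (f c)) hm 2
  nlinarith [Real.pi_pos, hm2, key]

lemma submean (f : ℂ → ℂ) (c : ℂ) (R : ℝ) (hR : 0 < R)
    (hcont : ContinuousOn f (closedBall c R))
    (hdiff : ∀ z ∈ ball c R, DifferentiableAt ℂ f z) :
    π * R ^ 2 * ‖f c‖ ^ 2 ≤ ∫ z in ball c R, ‖f z‖ ^ 2 := by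
  set G : ℝ × ℝ → ℝ := fun p => p.1 * ‖f (circleMap c p.1 p.2)‖ ^ 2 with hG
  set S : Set (ℝ × ℝ) := Ioo (0:ℝ) R ×ˢ Ioo (-π) π with hS
  have hSm : MeasurableSet S := (measurableSet_Ioo.prod measurableSet_Ioo)
  have hSsub : S ⊆ polarCoord.target := fun p hp => ⟨Ioo_subset_Ioi_self hp.1, hp.2⟩
  have hcirc : ∀ p : ℝ × ℝ, c + Complex.polarCoord.symm p = circleMap c p.1 p.2 := by
    intro p
    simp [circleMap, Complex.exp_mul_I, Complex.ofReal_cos, Complex.ofReal_sin]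
  -- Step A : polar coordinates
  have hpolar : (∫ z in ball c R, ‖f z‖ ^ 2) = ∫ p in S, G p := by
    rw [← integral_indicator measurableSet_ball]
    rw [show (∫ z, (ball c R).indicator (fun z => ‖f z‖ ^ 2) z)
        = ∫ z, (ball c R).indicator (fun z => ‖f z‖ ^ 2) (c + z) from
      (integral_add_left_eq_self c (μ := volume)
        (f := fun z => (ball c R).indicator (fun z => ‖f z‖ ^ 2) z)).symm]
    rw [← Complex.integral_comp_polarCoord_symm
      (fun z => (ball c R).indicator (fun z => ‖f z‖ ^ 2) (c + z))]
    rw [show (∫ p in polarCoord.target,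
          p.1 • (ball c R).indicator (fun z => ‖f z‖ ^ 2) (c + Complex.polarCoord.symm p))
        = ∫ p in polarCoord.target, S.indicator G p from ?_,
      setIntegral_indicator hSm,
      inter_eq_self_of_subset_right hSsub]
    refine setIntegral_congr_fun (measurableSet_Ioi.prod measurableSet_Ioo) ?_
    intro p hp
    have hp1 : (0:ℝ) < p.1 := hp.1
    have hp2 : p.2 ∈ Ioo (-π) π := hp.2
    have habs : ‖Complex.polarCoord.symm p‖ = p.1 := by
      rw [Complex.norm_polarCoord_symm, abs_of_pos hp1]
    have hmem : c + Complex.polarCoord.symm p ∈ ball c R ↔ p.1 < R := by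
      simp [mem_ball, dist_eq_norm, habs, abs_of_pos hp1]
    dsimp only
    by_cases hpR : p.1 < R
    · rw [indicator_of_mem (hmem.mpr hpR), indicator_of_mem (by exact ⟨⟨hp1, hpR⟩, hp2⟩), hG]
      rw [hcirc p]
      simp [smul_eq_mul]
    · rw [indicator_of_notMem (fun h => hpR (hmem.mp h)),
        indicator_of_notMem (fun h => hpR h.1.2), smul_zero]
  -- integrability of G on S
  have hGcont : ContinuousOn G (Icc (0:ℝ) R ×ˢ Icc (-π) π) := by
    apply ContinuousOn.mul continuousOn_fst
    apply ContinuousOn.pow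
    apply continuous_norm.comp_continuousOn
    apply hcont.comp
    · exact (continuous_const.add ((Complex.continuous_ofReal.comp continuous_fst).mul
        ((Complex.continuous_ofReal.comp continuous_snd).mul continuous_const).cexp)).continuousOn.congr
        (fun p _ => by simp [circleMap]; ring)
    · intro p hp
      have := circleMap_mem_closedBall c (hp.1.1) p.2
      exact closedBall_subset_closedBall (hp.1.2) this
  have hGint : IntegrableOn G S := by
    apply (hGcont.integrableOn_compact (isCompact_Icc.prod isCompact_Icc)).mono_set
    exact prod_mono Ioo_subset_Icc_self Ioo_subset_Icc_self
  -- Step B : Fubini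
  have hrestrict : (volume : Measure (ℝ × ℝ)).restrict S
      = ((volume : Measure ℝ).restrict (Ioo (0:ℝ) R)).prod ((volume : Measure ℝ).restrict (Ioo (-π) π)) := by
    rw [Measure.prod_restrict, hS, ← Measure.volume_eq_prod]
  have hGint' : Integrable G (((volume : Measure ℝ).restrict (Ioo (0:ℝ) R)).prod
      ((volume : Measure ℝ).restrict (Ioo (-π) π))) := by rwa [← hrestrict]
  have hfub : (∫ p in S, G p) = ∫ ρ in Ioo (0:ℝ) R, ∫ θ in Ioo (-π) π, G (ρ, θ) := by
    rw [hrestrict, MeasureTheory.integral_prod _ hGint']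
  -- inner bound
  have hinner : ∀ ρ ∈ Ioo (0:ℝ) R,
      2 * π * ‖f c‖ ^ 2 * ρ ≤ ∫ θ in Ioo (-π) π, G (ρ, θ) := by
    intro ρ hρ
    have hu : (∫ θ in Ioo (-π) π, G (ρ, θ))
        = ρ * ∫ θ in Ioo (-π) π, ‖f (circleMap c ρ θ)‖ ^ 2 := by
      rw [← integral_const_mul]
    rw [hu]
    have hper : Function.Periodic (fun θ => ‖f (circleMap c ρ θ)‖ ^ 2) (2*π) :=
      fun θ => by simp only [periodic_circleMap c ρ θ]
    have hval : (∫ θ in Ioo (-π) π, ‖f (circleMap c ρ θ)‖ ^ 2)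
        = ∫ θ in (0:ℝ)..(2*π), ‖f (circleMap c ρ θ)‖ ^ 2 := by
      rw [← integral_Ioc_eq_integral_Ioo,
        ← intervalIntegral.integral_of_le (by linarith [Real.pi_pos] : (-π:ℝ) ≤ π)]
      have := hper.intervalIntegral_add_eq (-π) 0
      simp only [zero_add] at this
      rw [show (-π) + 2*π = π by ring] at this
      exact this
    rw [hval]
    have hkey := circle_sq_bound f c R ρ hρ.1 hρ.2.le hcont hdiff
    calc 2 * π * ‖f c‖ ^ 2 * ρ
        ≤ (∫ θ in (0:ℝ)..(2*π), ‖f (circleMap c ρ θ)‖ ^ 2) * ρ := by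
          apply mul_le_mul_of_nonneg_right hkey hρ.1.le
      _ = ρ * ∫ θ in (0:ℝ)..(2*π), ‖f (circleMap c ρ θ)‖ ^ 2 := by ring
  -- outer integration
  have houter : IntegrableOn (fun ρ => ∫ θ in Ioo (-π) π, G (ρ, θ)) (Ioo (0:ℝ) R) :=
    hGint'.integral_prod_left
  have hconst : IntegrableOn (fun ρ => 2 * π * ‖f c‖ ^ 2 * ρ) (Ioo (0:ℝ) R) := by
    apply Integrable.mono_measure ?_ (Measure.restrict_mono Ioo_subset_Icc_self le_rfl)
    exact (continuous_const.mul continuous_id).integrableOn_Icc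
  have hmono : (∫ ρ in Ioo (0:ℝ) R, 2 * π * ‖f c‖ ^ 2 * ρ)
      ≤ ∫ ρ in Ioo (0:ℝ) R, ∫ θ in Ioo (-π) π, G (ρ, θ) :=
    setIntegral_mono_on hconst houter measurableSet_Ioo hinner
  have hid : (∫ ρ in Ioo (0:ℝ) R, (ρ:ℝ)) = R ^ 2 / 2 := by
    rw [← integral_Ioc_eq_integral_Ioo, ← intervalIntegral.integral_of_le hR.le]
    simp [integral_id]
  have hlhs : (∫ ρ in Ioo (0:ℝ) R, 2 * π * ‖f c‖ ^ 2 * ρ)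
      = π * R ^ 2 * ‖f c‖ ^ 2 := by
    rw [integral_const_mul, hid]
    ring
  rw [hpolar, hfub]
  rw [hlhs] at hmono
  exact hmono

/-- L² Riemann removable singularity theorem. -/
theorem removable_singularity_of_L2
    (r : ℝ) (hr : 0 < r) (g : ℂ → ℂ)
    (hg : DifferentiableOn ℂ g (ball (0 : ℂ) r \ {0}))
    (hL2 : IntegrableOn (fun ζ => (‖g ζ‖) ^ 2) (ball (0 : ℂ) r \ {0}) volume) :
    ∃ h : ℂ → ℂ, DifferentiableOn ℂ h (ball (0 : ℂ) r) ∧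
      ∀ ζ ∈ ball (0 : ℂ) r \ {0}, h ζ = g ζ := by
  have hopen : IsOpen (ball (0:ℂ) r \ {0}) := isOpen_ball.sdiff isClosed_singleton
  have hdAt : ∀ z ∈ ball (0:ℂ) r \ {0}, DifferentiableAt ℂ g z :=
    fun z hz => hg.differentiableAt (hopen.mem_nhds hz)
  have hnn : (0:ℂ→ℝ) ≤ᵐ[volume.restrict (ball (0:ℂ) r \ {0})] fun ζ => ‖g ζ‖ ^ 2 :=
    Filter.Eventually.of_forall fun z => sq_nonneg _
  have key : Tendsto (fun z : ℂ => z * g z) (𝓝[≠] (0:ℂ)) (𝓝 0) := by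
    rw [Metric.tendsto_nhdsWithin_nhds]
    intro ε hε
    have hpos : 0 < π * ε ^ 2 / 8 := by positivity
    -- find a small radius where the integral is small
    have side : ∃ δ₀ : ℝ, 0 < δ₀ ∧ δ₀ ≤ r / 2 ∧
        (∫ z in (ball (0:ℂ) δ₀ \ {0}), ‖g z‖ ^ 2) ≤ π * ε ^ 2 / 8 := by
      set s : ℕ → Set ℂ := fun n => ball (0:ℂ) r \ closedBall 0 (r / (n + 2)) with hs
      have hsm : ∀ n, MeasurableSet (s n) :=
        fun n => measurableSet_ball.diff measurableSet_closedBall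
      have hmono : Monotone s := by
        intro a b hab
        apply diff_subset_diff_right
        apply closedBall_subset_closedBall
        exact div_le_div_of_nonneg_left hr.le (by positivity)
          (by exact_mod_cast Nat.add_le_add_right hab 2)
      have hunion : (⋃ n, s n) = ball (0:ℂ) r \ {0} := by
        ext z
        simp only [hs, mem_iUnion, mem_diff, mem_ball, mem_closedBall, mem_singleton_iff,
          dist_zero_right, not_le]
        constructor
        · rintro ⟨n, hzb, hzn⟩
          refine ⟨hzb, fun h => ?_⟩
          rw [h] at hzn
          simp only [norm_zero] at hzn
          have : (0:ℝ) < r / (n + 2) := by positivity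
          linarith
        · rintro ⟨hzb, hz0⟩
          have hz : 0 < ‖z‖ := norm_pos_iff.mpr hz0
          obtain ⟨n, hn⟩ := exists_nat_gt (r / ‖z‖)
          refine ⟨n, hzb, ?_⟩
          rw [div_lt_iff₀ (by positivity)]
          rw [div_lt_iff₀ hz] at hn
          nlinarith [hz]
      have htend := tendsto_setIntegral_of_monotone hsm hmono
        (by rw [hunion]; exact hL2)
      rw [hunion] at htend
      set V : ℝ := ∫ z in (ball (0:ℂ) r \ {0}), ‖g z‖ ^ 2 with hV
      obtain ⟨n, hn⟩ := (htend.eventually (eventually_gt_nhds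
        (by linarith : V - π * ε ^ 2 / 8 < V))).exists
      refine ⟨r / (n + 2), by positivity, ?_, ?_⟩
      · exact div_le_div_of_nonneg_left hr.le (by norm_num)
          (by norm_num [Nat.cast_nonneg])
      · set T : Set ℂ := ball (0:ℂ) (r / (n + 2)) \ {0} with hT
        have hrn : r / (n + 2) ≤ r := by
          rw [div_le_iff₀ (by positivity)]
          nlinarith [hr.le, Nat.cast_nonneg (α := ℝ) n]
        have hTsub : T ⊆ ball (0:ℂ) r \ {0} :=
          diff_subset_diff_left (ball_subset_ball hrn)
        have hdisj : Disjoint (s n) T := by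
          rw [disjoint_left]
          rintro z hz1 hz2
          exact hz1.2 (ball_subset_closedBall hz2.1)
        have hssub : s n ⊆ ball (0:ℂ) r \ {0} :=
          diff_subset_diff_right (singleton_subset_iff.mpr (mem_closedBall_self (by positivity)))
        have hint1 : IntegrableOn (fun ζ => ‖g ζ‖ ^ 2) (s n) := hL2.mono_set hssub
        have hint2 : IntegrableOn (fun ζ => ‖g ζ‖ ^ 2) T := hL2.mono_set hTsub
        have hun : (∫ z in s n ∪ T, ‖g z‖ ^ 2)
            = (∫ z in s n, ‖g z‖ ^ 2) + ∫ z in T, ‖g z‖ ^ 2 :=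
          setIntegral_union hdisj (measurableSet_ball.diff (measurableSet_singleton 0)) hint1 hint2
        have hle : (∫ z in s n ∪ T, ‖g z‖ ^ 2) ≤ V :=
          setIntegral_mono_set hL2 hnn ((union_subset hssub hTsub).eventuallyLE)
        linarith
    obtain ⟨δ₀, hδ₀pos, hδ₀r, hsmall⟩ := side
    refine ⟨2 / 3 * δ₀, by positivity, ?_⟩
    intro z hz hzd
    have hz0 : z ≠ 0 := hz
    have hm : 0 < ‖z‖ := norm_pos_iff.mpr hz0
    rw [dist_zero_right] at hzd
    have hzlt : ‖z‖ < 2 / 3 * δ₀ := hzd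
    have hsub : closedBall z (‖z‖ / 2) ⊆ ball (0:ℂ) r \ {0} := by
      intro w hw
      rw [mem_closedBall, dist_eq_norm] at hw
      have h1 : ‖w‖ ≤ 3 / 2 * ‖z‖ := by
        have h3 := norm_sub_norm_le w z
        linarith
      have h2 : ‖z‖ / 2 ≤ ‖w‖ := by
        have h3 := norm_sub_norm_le z w
        rw [← norm_sub_rev w z] at h3
        linarith
      constructor
      · rw [mem_ball_zero_iff]
        calc ‖w‖ ≤ 3 / 2 * ‖z‖ := h1
          _ < 3 / 2 * (2 / 3 * δ₀) := by linarith
          _ = δ₀ := by ring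
          _ ≤ r / 2 := hδ₀r
          _ < r := by linarith
      · simp only [mem_singleton_iff]
        intro h
        rw [h] at h2
        simp at h2
        linarith
    have hcont' : ContinuousOn g (closedBall z (‖z‖ / 2)) :=
      fun w hw => ((hdAt w (hsub hw)).continuousAt).continuousWithinAt
    have hd' : ∀ w ∈ ball z (‖z‖ / 2), DifferentiableAt ℂ g w :=
      fun w hw => hdAt w (hsub (ball_subset_closedBall hw))
    have hsm := submean g z (‖z‖ / 2) (by positivity) hcont' hd'
    have hball_sub : ball z (‖z‖ / 2) ⊆ ball (0:ℂ) δ₀ \ {0} := by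
      intro w hw
      rw [mem_ball, dist_eq_norm] at hw
      have h1 : ‖w‖ < 3 / 2 * ‖z‖ := by
        have h3 := norm_sub_norm_le w z
        linarith
      have h2 : ‖z‖ / 2 < ‖w‖ := by
        have h3 := norm_sub_norm_le z w
        rw [← norm_sub_rev w z] at h3
        linarith
      constructor
      · rw [mem_ball_zero_iff]
        calc ‖w‖ < 3 / 2 * ‖z‖ := h1
          _ < 3 / 2 * (2 / 3 * δ₀) := by linarith
          _ = δ₀ := by ring
      · simp only [mem_singleton_iff]
        intro h
        rw [h] at h2
        simp at h2
        linarith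
    have hδsub : ball (0:ℂ) δ₀ \ {0} ⊆ ball (0:ℂ) r \ {0} :=
      diff_subset_diff_left (ball_subset_ball (by linarith))
    have hnn' : (0:ℂ→ℝ) ≤ᵐ[volume.restrict (ball (0:ℂ) δ₀ \ {0})] fun ζ => ‖g ζ‖ ^ 2 :=
      Filter.Eventually.of_forall fun w => sq_nonneg _
    have h2 : (∫ w in ball z (‖z‖ / 2), ‖g w‖ ^ 2)
        ≤ ∫ w in (ball (0:ℂ) δ₀ \ {0}), ‖g w‖ ^ 2 :=
      setIntegral_mono_set (hL2.mono_set hδsub) hnn' hball_sub.eventuallyLE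
    have hfinal : π * (‖z‖ / 2) ^ 2 * ‖g z‖ ^ 2 ≤ π * ε ^ 2 / 8 := by
      calc π * (‖z‖ / 2) ^ 2 * ‖g z‖ ^ 2
          ≤ ∫ w in ball z (‖z‖ / 2), ‖g w‖ ^ 2 := hsm
        _ ≤ ∫ w in (ball (0:ℂ) δ₀ \ {0}), ‖g w‖ ^ 2 := h2
        _ ≤ π * ε ^ 2 / 8 := hsmall
    rw [dist_zero_right, norm_mul]
    have hsq : (‖z‖ * ‖g z‖) ^ 2 ≤ ε ^ 2 / 2 := by
      have hπ := Real.pi_pos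
      nlinarith [hfinal, sq_nonneg (‖z‖ * ‖g z‖)]
    nlinarith [hsq, mul_nonneg (norm_nonneg z) (norm_nonneg (g z)), hε]
  -- convert to littleO and apply removable singularity
  have h2 : Tendsto (fun z : ℂ => z * g 0) (𝓝[≠] (0:ℂ)) (𝓝 0) := by
    have h3 : Tendsto (fun z : ℂ => z * g 0) (𝓝 (0:ℂ)) (𝓝 (0 * g 0)) :=
      (continuous_id.mul continuous_const).tendsto 0
    rw [zero_mul] at h3
    exact h3.mono_left nhdsWithin_le_nhds
  have hg0 : Tendsto (fun z : ℂ => (g z - g 0) / z⁻¹) (𝓝[≠] (0:ℂ)) (𝓝 0) := by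
    have h4 := key.sub h2
    rw [sub_zero] at h4
    exact Tendsto.congr (fun z => by rw [div_eq_mul_inv, inv_inv]; ring) h4
  have ho : (fun z => g z - g 0) =o[𝓝[≠] (0:ℂ)] fun z => (z - 0)⁻¹ := by
    rw [isLittleO_iff_tendsto']
    · simpa using hg0
    · filter_upwards [self_mem_nhdsWithin] with z hz hinv
      exact absurd (inv_eq_zero.mp (by simpa using hinv)) hz
  have hmem : ball (0:ℂ) r \ {0} ∈ 𝓝[≠] (0:ℂ) :=
    diff_mem_nhdsWithin_compl (ball_mem_nhds 0 hr) {0}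
  have H := Complex.differentiableOn_update_limUnder_insert_of_isLittleO hmem hg ho
  rw [insert_diff_singleton, insert_eq_self.mpr (mem_ball_self hr)] at H
  exact ⟨_, H, fun ζ hζ => Function.update_of_ne (by simpa using hζ.2) _ _⟩
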